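/- Sufficient condition for positivity of the second variation with free endpoints (scalar case): let P, Q : [a,b] → ℝ be continuous with P also C¹ and P > 0 on [a,b], and suppose h : [a,b] → ℝ is a C² solution of (P h')' = Q h with h > 0 on [a,b], h'(a) = 0 and h'(b) ≥ 0. Then for every C¹ function v : [a,b] → ℝ, ∫_a^b (P(x) v'(x)² + Q(x) v(x)²) dx ≥ 0. -/
import Mathlib


open Set intervalIntegral

/-- Sufficient condition for positivity of the second variation with free
endpoints (scalar case). -/
theorem second_variation_nonneg_free_endpoints
    (a b : ℝ) (hab : a < b)
    (P P' Q : ℝ → ℝ)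
    (hPc : ContinuousOn P (Icc a b)) (hQc : ContinuousOn Q (Icc a b))
    (hP : ∀ x ∈ Icc a b, HasDerivAt P (P' x) x)
    (hP'c : ContinuousOn P' (Icc a b))
    (hPpos : ∀ x ∈ Icc a b, 0 < P x)
    (h h' h'' : ℝ → ℝ)
    (hh : ∀ x ∈ Icc a b, HasDerivAt h (h' x) x)
    (hh' : ∀ x ∈ Icc a b, HasDerivAt h' (h'' x) x)
    (hh''c : ContinuousOn h'' (Icc a b))
    (hpos : ∀ x ∈ Icc a b, 0 < h x)
    (hJacobi : ∀ x ∈ Icc a b,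
      HasDerivAt (fun t => P t * h' t) (Q x * h x) x)
    (hha : h' a = 0) (hhb : 0 ≤ h' b)
    (v v' : ℝ → ℝ)
    (hv : ∀ x ∈ Icc a b, HasDerivAt v (v' x) x)
    (hv'c : ContinuousOn v' (Icc a b)) :
    0 ≤ ∫ x in a..b, (P x * (v' x) ^ 2 + Q x * (v x) ^ 2) := by
  have hab' : a ≤ b := hab.le
  have huIcc : uIcc a b = Icc a b := uIcc_of_le hab'
  have hhne : ∀ x ∈ Icc a b, h x ≠ 0 := fun x hx => (hpos x hx).ne'
  -- continuity of basic functions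
  have hhc : ContinuousOn h (Icc a b) := fun x hx => (hh x hx).continuousAt.continuousWithinAt
  have hh'c : ContinuousOn h' (Icc a b) := fun x hx => (hh' x hx).continuousAt.continuousWithinAt
  have hvc : ContinuousOn v (Icc a b) := fun x hx => (hv x hx).continuousAt.continuousWithinAt
  -- decomposition
  set F : ℝ → ℝ := fun x => P x * (v' x - h' x * v x / h x) ^ 2 with hF
  set G : ℝ → ℝ := fun x => (P x * h' x) * (v x ^ 2 / h x) with hG
  set G' : ℝ → ℝ := fun x => Q x * h x * (v x ^ 2 / h x) +
      (P x * h' x) * (((2 : ℕ) * v x ^ 1 * v' x * h x - v x ^ 2 * h' x) / h x ^ 2) with hG'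
  have hGd : ∀ x ∈ Icc a b, HasDerivAt G (G' x) x := by
    intro x hx
    exact (hJacobi x hx).mul (((hv x hx).pow 2).div (hh x hx) (hhne x hx))
  have hdecomp : ∀ x ∈ Icc a b,
      P x * (v' x) ^ 2 + Q x * (v x) ^ 2 = F x + G' x := by
    intro x hx
    have hne := hhne x hx
    simp only [hF, hG']
    field_simp
    ring
  -- continuity of the pieces
  have hFc : ContinuousOn F (Icc a b) := by
    apply hPc.mul
    exact ((hv'c.sub ((hh'c.mul hvc).div hhc hhne)).pow 2)
  have hG'c : ContinuousOn G' (Icc a b) := by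
    apply ContinuousOn.add
    · exact (hQc.mul hhc).mul ((hvc.pow 2).div hhc hhne)
    · refine (hPc.mul hh'c).mul (ContinuousOn.div ?_ (hhc.pow 2) ?_)
      · exact ((continuousOn_const.mul (hvc.pow 1)).mul hv'c).mul hhc |>.sub
          ((hvc.pow 2).mul hh'c)
      · intro x hx; exact pow_ne_zero 2 (hhne x hx)
  have hFi : IntervalIntegrable F MeasureTheory.volume a b :=
    hFc.intervalIntegrable_of_Icc hab'
  have hG'i : IntervalIntegrable G' MeasureTheory.volume a b :=
    hG'c.intervalIntegrable_of_Icc hab'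
  have hcongr : (∫ x in a..b, (P x * (v' x) ^ 2 + Q x * (v x) ^ 2))
      = (∫ x in a..b, F x) + (∫ x in a..b, G' x) := by
    rw [← intervalIntegral.integral_add hFi hG'i]
    apply intervalIntegral.integral_congr
    intro x hx
    exact hdecomp x (huIcc ▸ hx)
  rw [hcongr]
  have hF0 : 0 ≤ ∫ x in a..b, F x := by
    apply intervalIntegral.integral_nonneg hab'
    intro x hx
    exact mul_nonneg (hPpos x hx).le (sq_nonneg _)
  have hG0 : (∫ x in a..b, G' x) = G b - G a := by
    apply intervalIntegral.integral_eq_sub_of_hasDerivAt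
    · intro x hx; exact hGd x (huIcc ▸ hx)
    · exact hG'i
  have hGa : G a = 0 := by
    simp [hG, hha]
  have hGb : 0 ≤ G b := by
    have hb : b ∈ Icc a b := right_mem_Icc.mpr hab'
    exact mul_nonneg (mul_nonneg (hPpos b hb).le hhb)
      (div_nonneg (sq_nonneg _) (hpos b hb).le)
  rw [hG0, hGa, sub_zero]
  linarith
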